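/- arXiv:1302.6164 — 3 statements merged into one kernel-verified Lean document; each statement's English description precedes it below -/
import Mathlib

section
/- Let K be a convex body in ℝⁿ, u a unit vector, and t > 0 be such that K and tu + K touch (i.e., intersect but have disjoint interiors, equivalently t equals the length of a maximal chord of K parallel to u). Then vol(conv(K ∪ (tu + K))) = vol(K) + t · vol_{n-1}(K | u^⊥), where K | u^⊥ denotes the orthogonal projection of K onto the hyperplane through the origin perpendicular to u. -/
open MeasureTheory Metric Pointwise

/-- Volume of the k-dimensional Euclidean unit ball. -/
noncomputable def ubVol (k : ℕ) : ℝ :=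
  (volume (closedBall (0 : EuclideanSpace ℝ (Fin k)) 1)).toReal

/-- (n-1)-dimensional volume of the orthogonal projection of `K` onto the
hyperplane through the origin perpendicular to `u`. -/
noncomputable def projVol {n : ℕ} (K : Set (EuclideanSpace ℝ (Fin n)))
    (u : EuclideanSpace ℝ (Fin n)) : ℝ :=
  (volume (((ℝ ∙ u)ᗮ.orthogonalProjectionOnto) '' K)).toReal

/-- Length of a maximal chord of `K` parallel to `u`:
`d_K(u) = max {t ≥ 0 : K ∩ (t • u + K) ≠ ∅}`. -/
noncomputable def maxChord {n : ℕ} (K : Set (EuclideanSpace ℝ (Fin n)))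
    (u : EuclideanSpace ℝ (Fin n)) : ℝ :=
  sSup {t : ℝ | 0 ≤ t ∧ (K ∩ ((t • u) +ᵥ K)).Nonempty}

/-- Support function of `K`. -/
noncomputable def suppFn {n : ℕ} (K : Set (EuclideanSpace ℝ (Fin n)))
    (u : EuclideanSpace ℝ (Fin n)) : ℝ :=
  sSup ((fun x => (inner ℝ x u : ℝ)) '' K)

/-- Width of `K` in direction `u` (for a unit vector `u`). -/
noncomputable def widthFn {n : ℕ} (K : Set (EuclideanSpace ℝ (Fin n)))
    (u : EuclideanSpace ℝ (Fin n)) : ℝ :=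
  suppFn K u + suppFn K (-u)

/-- Two sets touch: they intersect, but their interiors are disjoint. -/
def Touching {n : ℕ} (A B : Set (EuclideanSpace ℝ (Fin n))) : Prop :=
  (A ∩ B).Nonempty ∧ Disjoint (interior A) (interior B)

/-- A convex body: compact, convex, with nonempty interior. -/
def IsConvexBody {n : ℕ} (K : Set (EuclideanSpace ℝ (Fin n))) : Prop :=
  Convex ℝ K ∧ IsCompact K ∧ (interior K).Nonempty

/-- An ellipsoid: the image of the unit ball under an invertible affine map. -/
def IsEllipsoid {n : ℕ} (K : Set (EuclideanSpace ℝ (Fin n))) : Prop :=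
  ∃ f : EuclideanSpace ℝ (Fin n) ≃ᵃ[ℝ] EuclideanSpace ℝ (Fin n),
    K = f '' closedBall 0 1


/-- Volume of a nonempty bounded convex subset of ℝ. -/
lemma vol_convex_real {I : Set ℝ} (hne : I.Nonempty) (hba : BddAbove I) (hbb : BddBelow I)
    (hc : Convex ℝ I) : volume I = ENNReal.ofReal (sSup I - sInf I) := by
  have hsub : I ⊆ Set.Icc (sInf I) (sSup I) := fun x hx =>
    ⟨csInf_le hbb hx, le_csSup hba hx⟩
  have hsup : Set.Ioo (sInf I) (sSup I) ⊆ I := by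
    intro x hx
    obtain ⟨a, ha, hax⟩ := exists_lt_of_csInf_lt hne hx.1
    obtain ⟨b, hb, hxb⟩ := exists_lt_of_lt_csSup hne hx.2
    exact hc.ordConnected.out ha hb ⟨hax.le, hxb.le⟩
  refine le_antisymm ?_ ?_
  · calc volume I ≤ volume (Set.Icc (sInf I) (sSup I)) := measure_mono hsub
      _ = ENNReal.ofReal (sSup I - sInf I) := Real.volume_Icc
  · calc ENNReal.ofReal (sSup I - sInf I) = volume (Set.Ioo (sInf I) (sSup I)) :=
        Real.volume_Ioo.symm
      _ ≤ volume I := measure_mono hsup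

/-- Adding a segment `[0,t]` to a nonempty bounded convex set of reals adds `t` to its volume. -/
lemma vol_convex_real_add_Icc {I : Set ℝ} (hne : I.Nonempty) (hba : BddAbove I)
    (hbb : BddBelow I) (hc : Convex ℝ I) {t : ℝ} (ht : 0 ≤ t) :
    volume (I + Set.Icc 0 t) = volume I + ENNReal.ofReal t := by

  set a := sInf I
  set b := sSup I
  have hab : a ≤ b := csInf_le_csSup hne hbb hba
  have hsub : I + Set.Icc 0 t ⊆ Set.Icc a (b + t) := by
    rintro z ⟨p, hp, r, hr, rfl⟩
    exact ⟨le_add_of_le_of_nonneg (csInf_le hbb hp) hr.1,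
      add_le_add (le_csSup hba hp) hr.2⟩
  have hsup : Set.Ioo a (b + t) ⊆ I + Set.Icc 0 t := by
    intro x hx
    obtain ⟨p₀, hp₀, hp₀x⟩ := exists_lt_of_csInf_lt hne hx.1
    have : x - t < b := by linarith [hx.2]
    obtain ⟨p₁, hp₁, hxp₁⟩ := exists_lt_of_lt_csSup hne this
    rcases le_or_gt p₁ x with h | h
    · exact ⟨p₁, hp₁, x - p₁, ⟨by linarith, by linarith⟩, by ring⟩
    · have hxI : x ∈ I := hc.ordConnected.out hp₀ hp₁ ⟨hp₀x.le, h.le⟩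
      exact ⟨x, hxI, 0, ⟨le_refl _, ht⟩, by ring⟩
  have h1 : volume (I + Set.Icc 0 t) = ENNReal.ofReal (b + t - a) := by
    refine le_antisymm ?_ ?_
    · calc volume (I + Set.Icc 0 t) ≤ volume (Set.Icc a (b + t)) := measure_mono hsub
        _ = ENNReal.ofReal (b + t - a) := Real.volume_Icc
    · calc ENNReal.ofReal (b + t - a) = volume (Set.Ioo a (b + t)) := Real.volume_Ioo.symm
        _ ≤ volume (I + Set.Icc 0 t) := measure_mono hsup
  rw [h1, vol_convex_real hne hba hbb hc, ← ENNReal.ofReal_add (by linarith) ht]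
  congr 1
  show sSup I + t - sInf I = sSup I - sInf I + t
  ring

lemma slice_convex {m : ℕ} {A : Set ((Fin m → ℝ) × ℝ)} (hA : Convex ℝ A) (y : Fin m → ℝ) :
    Convex ℝ (Prod.mk y ⁻¹' A) := by
  intro s hs r hr a b ha hb hab
  have := hA hs hr ha hb hab
  have hy : (y, a • s + b • r) = a • ((y, s) : (Fin m → ℝ) × ℝ) + b • (y, r) := by
    simp [Prod.ext_iff, ← add_smul, hab]
  rw [Set.mem_preimage, hy]
  exact this

lemma vol_add_prism {m : ℕ} {A : Set ((Fin m → ℝ) × ℝ)} (hA : Convex ℝ A)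
    (hAc : IsCompact A) {t : ℝ} (ht : 0 ≤ t) :
    volume (A + ({0} ×ˢ Set.Icc 0 t : Set ((Fin m → ℝ) × ℝ)))
      = volume A + ENNReal.ofReal t * volume (Prod.fst '' A) := by
  set B : Set ((Fin m → ℝ) × ℝ) := {0} ×ˢ Set.Icc 0 t with hB
  have hBc : IsCompact B := isCompact_singleton.prod isCompact_Icc
  have hABc : IsCompact (A + B) := hAc.add hBc
  have hAm : MeasurableSet A := hAc.isClosed.measurableSet
  have hABm : MeasurableSet (A + B) := hABc.isClosed.measurableSet
  have hfst : IsCompact (Prod.fst '' A) := hAc.image continuous_fst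
  have hfstm : MeasurableSet (Prod.fst '' A) := hfst.isClosed.measurableSet
  -- bound for slices
  obtain ⟨R, hR⟩ := hAc.isBounded.subset_closedBall 0
  -- slice identity
  have hslice : ∀ y : Fin m → ℝ, Prod.mk y ⁻¹' (A + B) = (Prod.mk y ⁻¹' A) + Set.Icc 0 t := by
    intro y
    ext s
    constructor
    · rintro ⟨⟨y', s'⟩, hps, ⟨z, r⟩, hqr, hsum⟩
      obtain ⟨hz, hr⟩ := hqr
      simp only [Set.mem_singleton_iff] at hz
      have h1 : y' + z = y ∧ s' + r = s := Prod.mk.injEq .. ▸ (by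
        simpa [Prod.ext_iff] using hsum)
      obtain ⟨h1, h2⟩ := h1
      subst hz
      simp only [add_zero] at h1
      subst h1
      exact ⟨s', hps, r, hr, h2⟩
    · rintro ⟨s', hs', r, hr, rfl⟩
      exact ⟨(y, s'), hs', (0, r), ⟨rfl, hr⟩, by simp [Prod.ext_iff]⟩
  have hkey : ∀ y : Fin m → ℝ,
      volume (Prod.mk y ⁻¹' (A + B))
        = volume (Prod.mk y ⁻¹' A) + (Prod.fst '' A).indicator (fun _ => ENNReal.ofReal t) y := by
    intro y
    rw [hslice y]
    by_cases hy : (Prod.mk y ⁻¹' A).Nonempty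
    · have hmem : y ∈ Prod.fst '' A := by
        obtain ⟨s, hs⟩ := hy
        exact ⟨(y, s), hs, rfl⟩
      rw [Set.indicator_of_mem hmem]
      refine vol_convex_real_add_Icc hy ?_ ?_ (slice_convex hA y) ht
      · refine ⟨R, fun s hs => ?_⟩
        have h1 := mem_closedBall_zero_iff.mp (hR hs)
        have h2 : |s| ≤ ‖((y, s) : (Fin m → ℝ) × ℝ)‖ := by
          simpa [Real.norm_eq_abs] using norm_snd_le ((y, s) : (Fin m → ℝ) × ℝ)
        exact le_trans (le_abs_self s) (le_trans h2 h1)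
      · refine ⟨-R, fun s hs => ?_⟩
        have h1 := mem_closedBall_zero_iff.mp (hR hs)
        have h2 : |s| ≤ ‖((y, s) : (Fin m → ℝ) × ℝ)‖ := by
          simpa [Real.norm_eq_abs] using norm_snd_le ((y, s) : (Fin m → ℝ) × ℝ)
        nlinarith [neg_abs_le s, abs_nonneg s]
    · rw [Set.not_nonempty_iff_eq_empty] at hy
      have hmem : y ∉ Prod.fst '' A := by
        rintro ⟨⟨y', s⟩, hps, rfl⟩
        exact absurd (Set.eq_empty_iff_forall_notMem.mp hy s hps) (by simpa using hps)
      rw [hy, Set.empty_add, Set.indicator_of_notMem hmem]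
      simp
  rw [Measure.volume_eq_prod, Measure.prod_apply hABm, Measure.prod_apply hAm]
  calc ∫⁻ y, volume (Prod.mk y ⁻¹' (A + B)) = ∫⁻ y, (volume (Prod.mk y ⁻¹' A)
        + (Prod.fst '' A).indicator (fun _ => ENNReal.ofReal t) y) := by
        exact lintegral_congr hkey
    _ = (∫⁻ y, volume (Prod.mk y ⁻¹' A))
        + ∫⁻ y, (Prod.fst '' A).indicator (fun _ => ENNReal.ofReal t) y :=
        lintegral_add_left (measurable_measure_prodMk_left hAm) _
    _ = (∫⁻ y, volume (Prod.mk y ⁻¹' A)) + ENNReal.ofReal t * volume (Prod.fst '' A) := by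
        rw [lintegral_indicator_const hfstm]

lemma convexHull_union_vadd {E : Type*} [NormedAddCommGroup E] [NormedSpace ℝ E]
    {K : Set E} (hK : Convex ℝ K) (v : E) :
    convexHull ℝ (K ∪ (v +ᵥ K)) = K + segment ℝ 0 v := by
  apply le_antisymm
  · apply convexHull_min
    · rintro x (hx | hx)
      · exact ⟨x, hx, 0, left_mem_segment ℝ 0 v, add_zero x⟩
      · obtain ⟨y, hy, rfl⟩ := hx
        exact ⟨y, hy, v, right_mem_segment ℝ 0 v, (add_comm y v : y + v = v +ᵥ y)⟩
    · exact hK.add (convex_segment 0 v)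
  · rintro z ⟨x, hx, s, hs, rfl⟩
    obtain ⟨a, b, ha, hb, hab, rfl⟩ := hs
    have h1 : x ∈ convexHull ℝ (K ∪ (v +ᵥ K)) := subset_convexHull ℝ _ (Or.inl hx)
    have h2 : v + x ∈ convexHull ℝ (K ∪ (v +ᵥ K)) :=
      subset_convexHull ℝ _ (Or.inr ⟨x, hx, rfl⟩)
    have := (convex_convexHull ℝ (K ∪ (v +ᵥ K))) h1 h2 ha hb hab
    have heq : a • x + b • (v + x) = x + (a • (0 : E) + b • v) := by
      have : a • x + b • x = x := by rw [← add_smul, hab, one_smul]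
      rw [smul_add, smul_zero, zero_add]
      linear_combination (norm := module) this
    rwa [heq] at this

lemma segment_zero_smul {E : Type*} [NormedAddCommGroup E] [NormedSpace ℝ E]
    (u : E) {t : ℝ} (ht : 0 < t) :
    segment ℝ (0 : E) (t • u) = (fun s : ℝ => s • u) '' Set.Icc 0 t := by
  rw [segment_eq_image]
  ext x
  constructor
  · rintro ⟨θ, hθ, rfl⟩
    exact ⟨θ * t, ⟨mul_nonneg hθ.1 ht.le, by nlinarith [hθ.2]⟩, by
      simp [smul_smul, mul_comm]⟩
  · rintro ⟨s, hs, rfl⟩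
    refine ⟨s / t, ⟨div_nonneg hs.1 ht.le, (div_le_one ht).mpr hs.2⟩, ?_⟩
    simp [smul_smul, div_mul_cancel₀ _ ht.ne', sub_zero, sub_smul]

/-- If `K` and its translate `t • u + K` touch, the volume of their convex hull is
`vol K + t · vol_{n-1}(K | u^⊥)`. -/
theorem volume_convexHull_union_touching_translate {n : ℕ} (hn : 1 ≤ n)
    (K : Set (EuclideanSpace ℝ (Fin n))) (hK : IsConvexBody K)
    (u : EuclideanSpace ℝ (Fin n)) (hu : ‖u‖ = 1) (t : ℝ) (ht : 0 < t)
    (htouch : Touching K ((t • u) +ᵥ K)) :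
    (volume (convexHull ℝ (K ∪ ((t • u) +ᵥ K)))).toReal
      = (volume K).toReal + t * projVol K u := by
  clear htouch
  obtain ⟨m, rfl⟩ : ∃ m, n = m + 1 := ⟨n - 1, (Nat.succ_pred_eq_of_pos hn).symm⟩
  have hu0 : u ≠ 0 := by
    intro h; rw [h, norm_zero] at hu; norm_num at hu
  -- orthonormal basis with `b (last) = u`
  have hon : Orthonormal ℝ (({Fin.last m} : Set (Fin (m + 1))).restrict (fun _ => u)) := by
    constructor
    · intro i; exact hu
    · intro i j hij
      exact absurd (Subtype.ext (i.2.trans j.2.symm)) hij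
  obtain ⟨b, hb⟩ := hon.exists_orthonormalBasis_extension_of_card_eq
    (by simp [finrank_euclideanSpace])
  have hbu : b (Fin.last m) = u := hb _ rfl
  -- the linear coordinate map
  set f : EuclideanSpace ℝ (Fin (m + 1)) → (Fin m → ℝ) × ℝ :=
    fun x => (fun i => b.repr x (Fin.castSucc i), b.repr x (Fin.last m)) with hf
  have hfrepr : ∀ x, f x = (fun i => b.repr x (Fin.castSucc i), b.repr x (Fin.last m)) :=
    fun _ => rfl
  set fl : EuclideanSpace ℝ (Fin (m + 1)) →ₗ[ℝ] ((Fin m → ℝ) × ℝ) :=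
    { toFun := f
      map_add' := fun x y => by simp only [hf, map_add]; rfl
      map_smul' := fun c x => by simp only [hf, _root_.map_smul, RingHom.id_apply]; rfl } with hfl
  have hfcont : Continuous f := fl.continuous_of_finiteDimensional
  -- measurable equivalence with the same underlying function
  set Φ : EuclideanSpace ℝ (Fin (m + 1)) ≃ᵐ ((Fin m → ℝ) × ℝ) :=
    (b.measurableEquiv.trans (((MeasurableEquiv.toLp 2 (Fin (m + 1) → ℝ)).symm).trans
      ((MeasurableEquiv.piFinSuccAbove (fun _ => ℝ) (Fin.last m)).trans
        MeasurableEquiv.prodComm))) with hΦ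
  have hΦf : ⇑Φ = f := by
    funext x
    show MeasurableEquiv.prodComm ((MeasurableEquiv.piFinSuccAbove (fun _ => ℝ) (Fin.last m))
      (((MeasurableEquiv.toLp 2 (Fin (m + 1) → ℝ)).symm) (b.measurableEquiv x))) = f x
    simp only [MeasurableEquiv.piFinSuccAbove_apply, hf]
    exact Prod.ext (by funext i; simp [Fin.succAbove_last]; rfl) rfl
  have hΦmp : MeasurePreserving f volume volume := by
    have h1 := b.measurePreserving_measurableEquiv
    have h2 := EuclideanSpace.volume_preserving_symm_measurableEquiv_toLp (Fin (m + 1))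
    have h3 : MeasurePreserving
        (MeasurableEquiv.piFinSuccAbove (fun _ : Fin (m + 1) => ℝ) (Fin.last m))
        volume volume := by
      have := measurePreserving_piFinSuccAbove (fun _ : Fin (m + 1) => (volume : Measure ℝ))
        (Fin.last m)
      simpa only [← volume_pi, ← Measure.volume_eq_prod] using this
    have h4 : MeasurePreserving (MeasurableEquiv.prodComm : ℝ × (Fin m → ℝ) ≃ᵐ _)
        volume volume := by
      rw [Measure.volume_eq_prod, Measure.volume_eq_prod]
      exact Measure.measurePreserving_swap
    have h5 := ((h4.comp h3).comp h2).comp h1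
    have hcomp : f = ((⇑(MeasurableEquiv.prodComm (α := ℝ) (β := Fin m → ℝ)) ∘
        ⇑(MeasurableEquiv.piFinSuccAbove (fun _ => ℝ) (Fin.last m))) ∘
        ⇑((MeasurableEquiv.toLp 2 (Fin (m + 1) → ℝ)).symm)) ∘ ⇑b.measurableEquiv := by
      rw [← hΦf]; rfl
    rwa [hcomp]
  have himg : ∀ s : Set (EuclideanSpace ℝ (Fin (m + 1))), MeasurableSet s →
      volume (f '' s) = volume s := by
    intro s hs
    rw [← hΦf, MeasurableEquiv.image_eq_preimage_symm]
    have : MeasurePreserving ⇑Φ.symm volume volume := (hΦf ▸ hΦmp : MeasurePreserving ⇑Φ volume volume).symm Φ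
    exact this.measure_preimage hs.nullMeasurableSet
  -- the hull as a Minkowski sum
  have hhull : convexHull ℝ (K ∪ ((t • u) +ᵥ K)) = K + (fun s : ℝ => s • u) '' Set.Icc 0 t := by
    rw [convexHull_union_vadd hK.1, segment_zero_smul u ht]
  set Seg := (fun s : ℝ => s • u) '' Set.Icc 0 t with hSeg
  have hSegc : IsCompact Seg := isCompact_Icc.image (continuous_id.smul continuous_const)
  have hKc := hK.2.1
  have hKSc : IsCompact (K + Seg) := hKc.add hSegc
  have hA : Convex ℝ (f '' K) := hK.1.linear_image fl
  have hAc : IsCompact (f '' K) := hKc.image hfcont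
  -- `f` on the segment
  have hfu : f u = (0, 1) := by
    have hrep : b.repr u = EuclideanSpace.single (Fin.last m) 1 := by
      rw [← hbu, OrthonormalBasis.repr_self]
    refine Prod.ext ?_ ?_
    · funext i
      simp [hf, hrep, EuclideanSpace.single_apply, (Fin.castSucc_lt_last i).ne]
    · simp [hf, hrep, EuclideanSpace.single_apply]
  have hfsm : ∀ s : ℝ, f (s • u) = (0, s) := by
    intro s
    have h1 : f (s • u) = s • f u := fl.map_smul s u
    rw [h1, hfu, Prod.smul_mk, smul_zero, smul_eq_mul, mul_one]
  have hfSeg : f '' Seg = ({0} ×ˢ Set.Icc 0 t : Set ((Fin m → ℝ) × ℝ)) := by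
    rw [hSeg, Set.image_image]
    apply Set.eq_of_subset_of_subset
    · rintro _ ⟨s, hs, rfl⟩
      show f (s • u) ∈ ({0} ×ˢ Set.Icc 0 t : Set ((Fin m → ℝ) × ℝ))
      rw [hfsm s]
      exact Set.mk_mem_prod rfl hs
    · rintro ⟨y, r⟩ ⟨hy, hr⟩
      exact ⟨r, hr, by
        show f (r • u) = (y, r)
        rw [hfsm r]
        exact Prod.ext (Set.mem_singleton_iff.mp hy).symm rfl⟩
  have hfadd : f '' (K + Seg) = f '' K + f '' Seg := Set.image_add fl
  have hvol1 : volume (convexHull ℝ (K ∪ ((t • u) +ᵥ K)))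
      = volume K + ENNReal.ofReal t * volume (Prod.fst '' (f '' K)) := by
    rw [hhull, ← himg _ hKSc.isClosed.measurableSet, hfadd, hfSeg,
      vol_add_prism hA hAc ht.le, himg _ hKc.isClosed.measurableSet]
  -- the orthogonal projection corresponds to `Prod.fst ∘ f`
  set V := (ℝ ∙ u)ᗮ with hV
  have hmemV : ∀ i : Fin m, b (Fin.castSucc i) ∈ V := by
    intro i
    rw [hV, Submodule.mem_orthogonal_singleton_iff_inner_right, ← hbu]
    exact b.orthonormal.2 (Fin.castSucc_lt_last i).ne'
  set w : Fin m → V := fun i => ⟨b (Fin.castSucc i), hmemV i⟩ with hw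
  have hwon : Orthonormal ℝ w := by
    constructor
    · intro i
      show ‖(w i : EuclideanSpace ℝ (Fin (m + 1)))‖ = 1
      exact b.orthonormal.1 _
    · intro i j hij
      have : (inner ℝ (w i : EuclideanSpace ℝ (Fin (m + 1))) (w j : EuclideanSpace ℝ (Fin (m + 1))) : ℝ) = 0 :=
        b.orthonormal.2 ((Fin.castSucc_injective m).ne hij)
      exact this
  have hVrank : Module.finrank ℝ V = m := by
    have h1 : Module.finrank ℝ (ℝ ∙ u) = 1 := finrank_span_singleton hu0
    have h2 := Submodule.finrank_add_finrank_orthogonal (K := ℝ ∙ u)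
    rw [h1, finrank_euclideanSpace, Fintype.card_fin] at h2
    rw [hV]
    omega
  have hspan : ⊤ ≤ Submodule.span ℝ (Set.range w) :=
    (hwon.linearIndependent.span_eq_top_of_card_eq_finrank' (by simp [hVrank])).ge
  set c : OrthonormalBasis (Fin m) ℝ V := OrthonormalBasis.mk hwon hspan with hc
  have hci : ∀ i, (c i : EuclideanSpace ℝ (Fin (m + 1))) = b (Fin.castSucc i) := by
    intro i
    rw [hc, OrthonormalBasis.coe_mk]
  set ψ : V ≃ᵐ (Fin m → ℝ) :=
    c.measurableEquiv.trans ((MeasurableEquiv.toLp 2 (Fin m → ℝ)).symm) with hψ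
  have hψmp : MeasurePreserving ⇑ψ volume volume :=
    (EuclideanSpace.volume_preserving_symm_measurableEquiv_toLp (Fin m)).comp
      c.measurePreserving_measurableEquiv
  have himgV : ∀ s : Set V, MeasurableSet s → volume (⇑ψ '' s) = volume s := by
    intro s hs
    rw [MeasurableEquiv.image_eq_preimage_symm]
    exact (hψmp.symm ψ).measure_preimage hs.nullMeasurableSet
  have hP : ∀ x, ⇑ψ (V.orthogonalProjectionOnto x) = Prod.fst (f x) := by
    intro x
    funext i
    show c.repr (V.orthogonalProjectionOnto x) i = b.repr x (Fin.castSucc i)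
    rw [OrthonormalBasis.repr_apply_apply, OrthonormalBasis.repr_apply_apply,
      Submodule.inner_orthogonalProjectionOnto_eq_of_mem_left, hci i]
  have hPc : IsCompact ((V.orthogonalProjectionOnto) '' K) :=
    hKc.image (V.orthogonalProjectionOnto).continuous
  have hPK : volume ((V.orthogonalProjectionOnto) '' K) = volume (Prod.fst '' (f '' K)) := by
    calc volume ((V.orthogonalProjectionOnto) '' K)
        = volume (⇑ψ '' ((V.orthogonalProjectionOnto) '' K)) :=
          (himgV _ hPc.isClosed.measurableSet).symm
      _ = volume (Prod.fst '' (f '' K)) := by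
          rw [Set.image_image, Set.image_image]
          simp only [hP]
  -- put everything together
  have hfinK : volume K ≠ ⊤ := hKc.measure_lt_top.ne
  have hfinP : volume (Prod.fst '' (f '' K)) ≠ ⊤ := (hAc.image continuous_fst).measure_lt_top.ne
  rw [hvol1, ENNReal.toReal_add hfinK (ENNReal.mul_ne_top ENNReal.ofReal_ne_top hfinP),
    ENNReal.toReal_mul, ENNReal.toReal_ofReal ht.le]
  congr 1
  simp only [projVol, ← hV]
  rw [hPK]
end

section
/- If E is an ellipsoid in ℝⁿ (n ≥ 2), then for every touching translate E' = v + E, vol(conv(E ∪ E')) / vol(E) = 1 + 2 v_{n-1} / v_n. -/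
open MeasureTheory Metric Pointwise

def UB (k : ℕ) : Set (EuclideanSpace ℝ (Fin k)) := closedBall 0 1

noncomputable def e₀ (k : ℕ) : EuclideanSpace ℝ (Fin (k+1)) := EuclideanSpace.single 0 2

lemma mem_ball_iff_sum (x : EuclideanSpace ℝ (Fin k)) :
    x ∈ UB k ↔ ∑ i, x i ^ 2 ≤ 1 := by
  rw [UB, mem_closedBall, dist_zero_right, EuclideanSpace.norm_eq]
  simp only [Real.norm_eq_abs, sq_abs]
  exact Real.sqrt_le_one

lemma mem_B_iff (x : EuclideanSpace ℝ (Fin (k+1))) :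
    x ∈ UB (k+1) ↔
      x 0 ^ 2 + ∑ i : Fin k, x i.succ ^ 2 ≤ 1 := by
  rw [mem_ball_iff_sum, Fin.sum_univ_succ]

lemma e₀_apply_zero : (e₀ k) 0 = 2 := by simp [e₀, EuclideanSpace.single_apply]

lemma e₀_apply_succ (i : Fin k) : (e₀ k) i.succ = 0 := by
  simp [e₀, EuclideanSpace.single_apply, Fin.succ_ne_zero]

lemma mem_wB_iff (x : EuclideanSpace ℝ (Fin (k+1))) :
    x ∈ (e₀ k) +ᵥ UB (k+1) ↔
      (x 0 - 2) ^ 2 + ∑ i : Fin k, x i.succ ^ 2 ≤ 1 := by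
  rw [Set.mem_vadd_set_iff_neg_vadd_mem, mem_B_iff]
  have h0 : ((-e₀ k) +ᵥ x) 0 = x 0 - 2 := by
    simp [vadd_eq_add, PiLp.add_apply, PiLp.neg_apply, e₀_apply_zero]; ring
  have hs : ∀ i : Fin k, ((-e₀ k) +ᵥ x) i.succ = x i.succ := fun i => by
    simp [vadd_eq_add, PiLp.add_apply, PiLp.neg_apply, e₀_apply_succ]
  rw [h0]
  simp_rw [hs]

/-- The three-piece decomposition of the capsule. -/
def capLeft (k : ℕ) : Set (EuclideanSpace ℝ (Fin (k+1))) :=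
  {x | x 0 ≤ 0} ∩ UB (k+1)

def capMid (k : ℕ) : Set (EuclideanSpace ℝ (Fin (k+1))) :=
  {x | x 0 ∈ Set.Icc (0:ℝ) 2 ∧ ∑ i : Fin k, x i.succ ^ 2 ≤ 1}

def capRight (k : ℕ) : Set (EuclideanSpace ℝ (Fin (k+1))) :=
  {x | 2 ≤ x 0} ∩ ((e₀ k) +ᵥ UB (k+1))

lemma segment_add_ball_eq :
    segment ℝ 0 (e₀ k) + UB (k+1)
      = capLeft k ∪ capMid k ∪ capRight k := by
  ext x
  constructor
  · rintro ⟨s, hs, b, hb, rfl⟩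
    rw [segment_eq_image] at hs
    obtain ⟨t, ht, rfl⟩ := hs
    simp only [smul_zero, zero_add] at *
    have hx0 : (t • e₀ k + b) 0 = 2 * t + b 0 := by
      simp [PiLp.add_apply, PiLp.smul_apply, e₀_apply_zero]; ring
    have hxs : ∀ i : Fin k, (t • e₀ k + b) i.succ = b i.succ := fun i => by
      simp [PiLp.add_apply, PiLp.smul_apply, e₀_apply_succ]
    rw [mem_B_iff] at hb
    rcases lt_trichotomy ((t • e₀ k + b) 0) 0 with h0 | h0 | h0
    · left; left
      refine ⟨le_of_lt h0, ?_⟩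
      rw [mem_B_iff, hx0]
      simp_rw [hxs]
      rw [hx0] at h0
      nlinarith [ht.1]
    · left; right
      refine ⟨⟨le_of_eq h0.symm, ?_⟩, ?_⟩
      · have hnn : (0:ℝ) ≤ ∑ i : Fin k, b i.succ ^ 2 :=
          Finset.sum_nonneg fun i _ => sq_nonneg (b i.succ)
        rw [hx0]; nlinarith [ht.1, ht.2, sq_nonneg (b 0)]
      · simp_rw [hxs]
        nlinarith [sq_nonneg (b 0)]
    · rcases le_or_gt ((t • e₀ k + b) 0) 2 with h2 | h2
      · left; right
        refine ⟨⟨le_of_lt h0, h2⟩, ?_⟩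
        simp_rw [hxs]
        nlinarith [sq_nonneg (b 0)]
      · right
        refine ⟨le_of_lt h2, ?_⟩
        rw [mem_wB_iff, hx0]
        simp_rw [hxs]
        rw [hx0] at h2
        nlinarith [ht.2]
  · rintro ((⟨h0, hb⟩ | ⟨⟨h0, h2⟩, hs⟩) | ⟨h2, hb⟩)
    · exact ⟨0, left_mem_segment ℝ 0 (e₀ k), x, hb, by simp⟩
    · refine ⟨(x 0 / 2) • e₀ k, ?_, x - (x 0 / 2) • e₀ k, ?_, by module⟩
      · rw [segment_eq_image]
        exact ⟨x 0 / 2, ⟨by linarith, by linarith⟩, by simp⟩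
      · rw [mem_B_iff]
        have h0' : (x - (x 0 / 2) • e₀ k) 0 = 0 := by
          simp [PiLp.sub_apply, PiLp.smul_apply, e₀_apply_zero]
        have hs' : ∀ i : Fin k, (x - (x 0 / 2) • e₀ k) i.succ = x i.succ := fun i => by
          simp [PiLp.sub_apply, PiLp.smul_apply, e₀_apply_succ]
        rw [h0']
        simp_rw [hs']
        simpa using hs
    · rw [Set.mem_vadd_set_iff_neg_vadd_mem] at hb
      exact ⟨e₀ k, right_mem_segment ℝ 0 (e₀ k), -e₀ k + x, hb, by module⟩

lemma convexHull_union_balls :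
    convexHull ℝ (UB (k+1) ∪ ((e₀ k) +ᵥ UB (k+1)))
      = segment ℝ 0 (e₀ k) + UB (k+1) := by
  apply le_antisymm
  · apply convexHull_min
    · rintro x (hx | hx)
      · exact ⟨0, left_mem_segment ℝ 0 (e₀ k), x, hx, by simp⟩
      · rw [Set.mem_vadd_set_iff_neg_vadd_mem] at hx
        exact ⟨e₀ k, right_mem_segment ℝ 0 (e₀ k), -e₀ k + x, hx, by module⟩
    · exact (convex_segment _ _).add (convex_closedBall _ _)
  · rintro x ⟨s, hs, b, hb, rfl⟩
    rw [segment_eq_image] at hs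
    obtain ⟨t, ht, rfl⟩ := hs
    have hcomb : (1 - t) • b + t • ((e₀ k) + b) = t • e₀ k + b := by module
    have h2 : e₀ k + b ∈ (e₀ k) +ᵥ UB (k+1) := Set.vadd_mem_vadd_set hb
    have hmem := (convex_convexHull ℝ (UB (k+1) ∪ ((e₀ k) +ᵥ UB (k+1))))
      (subset_convexHull ℝ _ (Set.mem_union_left _ hb))
      (subset_convexHull ℝ _ (Set.mem_union_right _ h2))
      (by linarith [ht.2] : (0:ℝ) ≤ 1 - t) ht.1 (by ring)
    rw [hcomb] at hmem
    simpa using hmem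

section Measure

lemma vol_preimage_eq {m : ℕ} (s : Set (Fin m → ℝ)) (hs : MeasurableSet s) :
    volume ((MeasurableEquiv.toLp 2 (Fin m → ℝ)).symm ⁻¹' s) = volume s :=
  (EuclideanSpace.volume_preserving_symm_measurableEquiv_toLp _).measure_preimage hs.nullMeasurableSet

lemma preimage_coord_eq {m : ℕ} (s : Set (Fin m → ℝ)) :
    (MeasurableEquiv.toLp 2 (Fin m → ℝ)).symm ⁻¹' s
      = {x : EuclideanSpace ℝ (Fin m) | x.ofLp ∈ s} := rfl

lemma measurable_eval0 : Measurable fun x : EuclideanSpace ℝ (Fin (k+1)) => x 0 :=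
  (measurable_pi_apply 0).comp (MeasurableEquiv.toLp 2 (Fin (k+1) → ℝ)).symm.measurable

lemma null_hyperplane (c : ℝ) :
    volume {x : EuclideanSpace ℝ (Fin (k+1)) | x 0 = c} = 0 := by
  have h : {x : EuclideanSpace ℝ (Fin (k+1)) | x 0 = c}
      = (MeasurableEquiv.toLp 2 (Fin (k+1) → ℝ)).symm ⁻¹' {y | y 0 = c} := rfl
  have hpre : {y : Fin (k+1) → ℝ | y 0 = c}
      = (fun y : Fin (k+1) → ℝ => y 0) ⁻¹' {c} := rfl
  have hms : MeasurableSet {y : Fin (k+1) → ℝ | y 0 = c} := hpre ▸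
    measurable_pi_apply (0 : Fin (k+1)) (measurableSet_singleton c)
  rw [h, vol_preimage_eq _ hms, volume_pi]
  exact Measure.pi_hyperplane (fun _ => (volume : Measure ℝ)) (0 : Fin (k+1)) c

lemma measurableSet_capMid : MeasurableSet (capMid k) := by
  have h : capMid k = (MeasurableEquiv.toLp 2 (Fin (k+1) → ℝ)).symm ⁻¹'
      {y : Fin (k+1) → ℝ | y 0 ∈ Set.Icc (0:ℝ) 2 ∧ ∑ i : Fin k, y i.succ ^ 2 ≤ 1} := rfl
  have h2 : {y : Fin (k+1) → ℝ | y 0 ∈ Set.Icc (0:ℝ) 2 ∧ ∑ i : Fin k, y i.succ ^ 2 ≤ 1}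
      = ((fun y : Fin (k+1) → ℝ => y 0) ⁻¹' Set.Icc (0:ℝ) 2)
        ∩ ((fun y : Fin (k+1) → ℝ => ∑ i : Fin k, y i.succ ^ 2) ⁻¹' Set.Iic 1) := rfl
  rw [h, h2]
  exact (MeasurableEquiv.toLp 2 (Fin (k+1) → ℝ)).symm.measurable
    ((measurable_pi_apply 0 measurableSet_Icc).inter
      ((Finset.measurable_sum _ fun (i : Fin k) _ =>
        (measurable_pi_apply i.succ).pow_const 2) measurableSet_Iic))

lemma vol_capMid : volume (capMid k) = 2 * volume (UB k) := by
  have hT : MeasurableSet {y : Fin k → ℝ | ∑ i, y i ^ 2 ≤ 1} :=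
    measurableSet_le
      (Finset.measurable_sum _ fun i _ => (measurable_pi_apply i).pow_const 2)
      measurable_const
  have hUB : volume (UB k) = volume {y : Fin k → ℝ | ∑ i, y i ^ 2 ≤ 1} := by
    rw [← vol_preimage_eq _ hT, preimage_coord_eq]
    congr 1
    ext x
    exact mem_ball_iff_sum x
  have h : capMid k = (MeasurableEquiv.toLp 2 (Fin (k+1) → ℝ)).symm ⁻¹'
      ((MeasurableEquiv.piFinSuccAbove (fun _ => ℝ) 0) ⁻¹'
        (Set.Icc (0:ℝ) 2 ×ˢ {y : Fin k → ℝ | ∑ i, y i ^ 2 ≤ 1})) := by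
    ext x
    simp only [capMid, Set.mem_preimage, MeasurableEquiv.piFinSuccAbove_apply,
      Set.mem_prod, Set.mem_setOf_eq, Fin.succAbove_zero]
    rfl
  have hprod : MeasurableSet (Set.Icc (0:ℝ) 2 ×ˢ {y : Fin k → ℝ | ∑ i, y i ^ 2 ≤ 1}) :=
    measurableSet_Icc.prod hT
  rw [h, vol_preimage_eq _ ((MeasurableEquiv.piFinSuccAbove (fun _ => ℝ) 0).measurable hprod)]
  have := (measurePreserving_piFinSuccAbove (fun _ : Fin (k+1) => (volume : Measure ℝ)) 0)
  rw [volume_pi, this.measure_preimage hprod.nullMeasurableSet, Measure.prod_prod,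
    Real.volume_Icc, hUB, volume_pi]
  norm_num

end Measure

lemma measurableSet_halfspace_le (c : ℝ) :
    MeasurableSet {x : EuclideanSpace ℝ (Fin (k+1)) | x 0 ≤ c} := by
  have h : {x : EuclideanSpace ℝ (Fin (k+1)) | x 0 ≤ c}
      = (MeasurableEquiv.toLp 2 (Fin (k+1) → ℝ)).symm ⁻¹'
        ((fun y : Fin (k+1) → ℝ => y 0) ⁻¹' Set.Iic c) := rfl
  rw [h]
  exact (MeasurableEquiv.toLp 2 (Fin (k+1) → ℝ)).symm.measurable
    (measurable_pi_apply 0 measurableSet_Iic)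

lemma measurableSet_halfspace_ge (c : ℝ) :
    MeasurableSet {x : EuclideanSpace ℝ (Fin (k+1)) | c ≤ x 0} := by
  have h : {x : EuclideanSpace ℝ (Fin (k+1)) | c ≤ x 0}
      = (MeasurableEquiv.toLp 2 (Fin (k+1) → ℝ)).symm ⁻¹'
        ((fun y : Fin (k+1) → ℝ => y 0) ⁻¹' Set.Ici c) := rfl
  rw [h]
  exact (MeasurableEquiv.toLp 2 (Fin (k+1) → ℝ)).symm.measurable
    (measurable_pi_apply 0 measurableSet_Ici)

lemma measurableSet_capLeft : MeasurableSet (capLeft k) :=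
  (measurableSet_halfspace_le 0).inter measurableSet_closedBall

lemma measurableSet_capRight : MeasurableSet (capRight k) := by
  apply (measurableSet_halfspace_ge 2).inter
  rw [UB, vadd_closedBall]
  exact measurableSet_closedBall

lemma vol_left_right : volume (capLeft k) + volume (capRight k) = volume (UB (k+1)) := by
  have hR : capRight k = (e₀ k) +ᵥ ({x | 0 ≤ x 0} ∩ UB (k+1)) := by
    ext x
    simp only [capRight, Set.mem_inter_iff, Set.mem_setOf_eq,
      Set.mem_vadd_set_iff_neg_vadd_mem]
    have h0 : ((-e₀ k) +ᵥ x) 0 = x 0 - 2 := by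
      simp [vadd_eq_add, PiLp.add_apply, PiLp.neg_apply, e₀_apply_zero]; ring
    rw [h0]
    constructor
    · rintro ⟨h1, h2⟩; exact ⟨by linarith, h2⟩
    · rintro ⟨h1, h2⟩; exact ⟨by linarith, h2⟩
  have hmid : MeasurableSet ({x : EuclideanSpace ℝ (Fin (k+1)) | 0 ≤ x 0} ∩ UB (k+1)) :=
    (measurableSet_halfspace_ge 0).inter measurableSet_closedBall
  rw [hR, measure_vadd]
  have hdisj : AEDisjoint volume (capLeft k) ({x : EuclideanSpace ℝ (Fin (k+1)) | 0 ≤ x 0} ∩ UB (k+1)) := by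
    apply measure_mono_null _ (null_hyperplane (k := k) 0)
    rintro x ⟨⟨h1, _⟩, ⟨h2, _⟩⟩
    exact le_antisymm h1 h2
  rw [← measure_union₀ hmid.nullMeasurableSet hdisj]
  congr 1
  ext x
  simp only [capLeft, Set.mem_union, Set.mem_inter_iff, Set.mem_setOf_eq]
  constructor
  · rintro (⟨_, h⟩ | ⟨_, h⟩) <;> exact h
  · intro h
    rcases le_total (x 0) 0 with h0 | h0
    · exact Or.inl ⟨h0, h⟩
    · exact Or.inr ⟨h0, h⟩

lemma volume_capsule :
    volume (convexHull ℝ (UB (k+1) ∪ ((e₀ k) +ᵥ UB (k+1))))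
      = volume (UB (k+1)) + 2 * volume (UB k) := by
  rw [convexHull_union_balls, segment_add_ball_eq]
  have hd1 : AEDisjoint volume (capLeft k) (capMid k) := by
    apply measure_mono_null _ (null_hyperplane (k := k) 0)
    rintro x ⟨⟨h1, _⟩, ⟨⟨h2, _⟩, _⟩⟩
    exact le_antisymm h1 h2
  have hd2 : AEDisjoint volume (capLeft k ∪ capMid k) (capRight k) := by
    apply measure_mono_null _ (null_hyperplane (k := k) 2)
    rintro x ⟨(⟨h1, hx⟩ | ⟨⟨_, h1⟩, _⟩), ⟨h2, _⟩⟩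
    · exfalso
      rw [mem_B_iff] at hx
      have hnn : (0:ℝ) ≤ ∑ i : Fin k, x i.succ ^ 2 :=
        Finset.sum_nonneg fun i _ => sq_nonneg (x i.succ)
      have h1' : x 0 ≤ 0 := h1
      have h2' : (2:ℝ) ≤ x 0 := h2
      nlinarith
    · exact le_antisymm h1 h2
  rw [measure_union₀ measurableSet_capRight.nullMeasurableSet hd2,
    measure_union₀ measurableSet_capMid.nullMeasurableSet hd1]
  rw [add_comm (volume (capLeft k)) (volume (capMid k)), add_assoc, vol_left_right,
    vol_capMid, add_comm]

section Affine

variable {m : ℕ}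

lemma affine_image_eq (f : EuclideanSpace ℝ (Fin m) ≃ᵃ[ℝ] EuclideanSpace ℝ (Fin m))
    (s : Set (EuclideanSpace ℝ (Fin m))) :
    ⇑f '' s = f 0 +ᵥ (⇑f.linear '' s) := by
  ext y
  simp only [Set.mem_vadd_set_iff_neg_vadd_mem, Set.mem_image, vadd_eq_add]
  constructor
  · rintro ⟨x, hx, rfl⟩
    refine ⟨x, hx, ?_⟩
    have := f.toAffineMap.decomp
    have h : f x = f.linear x + f 0 := by
      conv_lhs => rw [show (f x : EuclideanSpace ℝ (Fin m)) = (⇑f.toAffineMap) x from rfl, this]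
      simp
    rw [h]; abel
  · rintro ⟨x, hx, hxy⟩
    refine ⟨x, hx, ?_⟩
    have := f.toAffineMap.decomp
    have h : f x = f.linear x + f 0 := by
      conv_lhs => rw [show (f x : EuclideanSpace ℝ (Fin m)) = (⇑f.toAffineMap) x from rfl, this]
      simp
    rw [h, hxy]; abel

lemma affine_volume_image (f : EuclideanSpace ℝ (Fin m) ≃ᵃ[ℝ] EuclideanSpace ℝ (Fin m))
    (s : Set (EuclideanSpace ℝ (Fin m))) :
    volume (⇑f '' s)
      = ENNReal.ofReal |LinearMap.det (f.linear : EuclideanSpace ℝ (Fin m) →ₗ[ℝ] EuclideanSpace ℝ (Fin m))| * volume s := by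
  rw [affine_image_eq, measure_vadd]
  exact Measure.addHaar_image_linearMap _ _ _

end Affine

/-- For an ellipsoid `E` and any touching translate `v + E`,
`vol(conv(E ∪ (v+E))) / vol(E) = 1 + 2 v_{n-1} / v_n`. -/
theorem ellipsoid_touching_translate_volume_ratio {n : ℕ} (hn : 2 ≤ n)
    (E : Set (EuclideanSpace ℝ (Fin n))) (hE : IsEllipsoid E)
    (v : EuclideanSpace ℝ (Fin n)) (htouch : Touching E (v +ᵥ E)) :
    (volume (convexHull ℝ (E ∪ (v +ᵥ E)))).toReal / (volume E).toReal
      = 1 + 2 * ubVol (n - 1) / ubVol n := by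
  obtain ⟨k, rfl⟩ : ∃ k, n = k + 1 := ⟨n - 1, by omega⟩
  obtain ⟨f, hEf⟩ := hE
  rw [show (closedBall (0 : EuclideanSpace ℝ (Fin (k+1))) 1) = UB (k+1) from rfl] at hEf
  set w : EuclideanSpace ℝ (Fin (k+1)) := f.linear.symm v with hw_def
  have hfw : f.linear w = v := f.linear.apply_symm_apply v
  -- interior identities
  have hInt : interior E = ⇑f '' ball 0 1 := by
    rw [hEf, ← f.coe_toHomeomorphOfFiniteDimensional,
      ← f.toHomeomorphOfFiniteDimensional.image_interior,
      show interior (UB (k+1)) = ball 0 1 from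
        interior_closedBall (0 : EuclideanSpace ℝ (Fin (k+1))) one_ne_zero]
  have hIntv : interior (v +ᵥ E) = v +ᵥ interior E := by
    rw [← Set.image_vadd, ← Set.image_vadd]
    exact ((Homeomorph.addLeft v).image_interior E).symm
  -- ‖w‖ ≤ 2 from nonempty intersection
  have hle : ‖w‖ ≤ 2 := by
    obtain ⟨y, hy1, hy2⟩ := htouch.1
    rw [hEf] at hy1
    obtain ⟨x, hx, rfl⟩ := hy1
    rw [Set.mem_vadd_set_iff_neg_vadd_mem, hEf] at hy2
    obtain ⟨x', hx', hx'e⟩ := hy2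
    have hv : f x - f x' = v := by rw [hx'e, vadd_eq_add]; abel
    have hxw : x - x' = w := by
      have h1 : f.linear (x - x') = f x - f x' := by
        have h2 := (f : EuclideanSpace ℝ (Fin (k+1)) →ᵃ[ℝ] EuclideanSpace ℝ (Fin (k+1))).linearMap_vsub x x'
        simpa [vsub_eq_sub] using h2
      rw [hv] at h1
      rw [hw_def, ← h1, LinearEquiv.symm_apply_apply]
    rw [← hxw]
    have hx2 : ‖x‖ ≤ 1 := mem_closedBall_zero_iff.mp hx
    have hx'2 : ‖x'‖ ≤ 1 := mem_closedBall_zero_iff.mp hx'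
    calc ‖x - x'‖ ≤ ‖x‖ + ‖x'‖ := norm_sub_le x x'
    _ ≤ 2 := by linarith
  -- ‖w‖ ≥ 2 from disjoint interiors
  have hge : ¬ ‖w‖ < 2 := by
    intro hlt
    have h1 : f ((2⁻¹ : ℝ) • w) ∈ interior E := by
      rw [hInt]
      refine ⟨(2⁻¹ : ℝ) • w, ?_, rfl⟩
      rw [mem_ball_zero_iff, norm_smul]
      simp only [norm_inv, Real.norm_ofNat]
      rw [inv_mul_lt_iff₀ (by norm_num)]
      linarith
    have h2 : f ((2⁻¹ : ℝ) • w) ∈ interior (v +ᵥ E) := by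
      rw [hIntv, hInt]
      refine ⟨f (-(2⁻¹ : ℝ) • w), ⟨-(2⁻¹ : ℝ) • w, ?_, rfl⟩, ?_⟩
      · rw [mem_ball_zero_iff, norm_smul]
        simp only [norm_neg, norm_inv, Real.norm_ofNat]
        rw [inv_mul_lt_iff₀ (by norm_num)]
        linarith
      · show v +ᵥ f (-(2⁻¹ : ℝ) • w) = f ((2⁻¹ : ℝ) • w)
        have hmv : f ((2⁻¹ : ℝ) • w) = f.linear w +ᵥ f (-(2⁻¹ : ℝ) • w) := by
          conv_lhs => rw [show ((2⁻¹ : ℝ) • w) = w +ᵥ (-(2⁻¹ : ℝ) • w) by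
            rw [vadd_eq_add]; module]
          exact (f : EuclideanSpace ℝ (Fin (k+1)) →ᵃ[ℝ] EuclideanSpace ℝ (Fin (k+1))).map_vadd _ _
        rw [hmv, hfw]
    exact Set.disjoint_left.mp htouch.2 h1 h2
  have hw2 : ‖w‖ = 2 := le_antisymm hle (not_lt.mp hge)
  -- rotate e₀ to w
  have hne : ‖e₀ k‖ = ‖w‖ := by
    rw [hw2, e₀, EuclideanSpace.norm_single]
    norm_num
  set g : EuclideanSpace ℝ (Fin (k+1)) ≃ₗᵢ[ℝ] EuclideanSpace ℝ (Fin (k+1)) :=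
    Submodule.reflection (ℝ ∙ (e₀ k - w))ᗮ with hg_def
  have hgw : g (e₀ k) = w := Submodule.reflection_sub hne
  have hgB : ⇑g '' UB (k+1) = UB (k+1) := by
    have := g.toIsometryEquiv.image_closedBall 0 1
    rw [UB]
    simpa using this
  -- the composed affine map
  set F : EuclideanSpace ℝ (Fin (k+1)) ≃ᵃ[ℝ] EuclideanSpace ℝ (Fin (k+1)) :=
    (g.toLinearEquiv.toAffineEquiv).trans f with hF_def
  have hFcoe : ∀ x, F x = f (g x) := fun x => rfl
  have hFE : ⇑F '' UB (k+1) = E := by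
    rw [hEf, show ⇑F = ⇑f ∘ ⇑g from rfl, Set.image_comp, hgB]
  have hFlin : F.linear (e₀ k) = v := by
    have : F.linear (e₀ k) = f.linear (g (e₀ k)) := rfl
    rw [this, hgw, hfw]
  -- image of the capsule
  have hhull : convexHull ℝ (E ∪ (v +ᵥ E))
      = ⇑F '' convexHull ℝ (UB (k+1) ∪ ((e₀ k) +ᵥ UB (k+1))) := by
    have himg : ⇑F '' convexHull ℝ (UB (k+1) ∪ ((e₀ k) +ᵥ UB (k+1)))
        = convexHull ℝ (⇑F '' (UB (k+1) ∪ ((e₀ k) +ᵥ UB (k+1)))) :=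
      (F : EuclideanSpace ℝ (Fin (k+1)) →ᵃ[ℝ] EuclideanSpace ℝ (Fin (k+1))).image_convexHull _
    rw [himg]
    congr 1
    rw [Set.image_union, hFE]
    have hFvadd : ∀ x, F ((e₀ k) + x) = v + F x := by
      intro x
      have h := (F : EuclideanSpace ℝ (Fin (k+1)) →ᵃ[ℝ] EuclideanSpace ℝ (Fin (k+1))).map_vadd
        x (e₀ k)
      rw [show ((F : EuclideanSpace ℝ (Fin (k+1)) →ᵃ[ℝ] EuclideanSpace ℝ (Fin (k+1))).linear
        (e₀ k)) = v from hFlin] at h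
      exact h
    have h2 : ⇑F '' ((e₀ k) +ᵥ UB (k+1)) = v +ᵥ E := by
      ext y
      simp only [Set.mem_image, Set.mem_vadd_set_iff_neg_vadd_mem, vadd_eq_add]
      constructor
      · rintro ⟨z, hz, rfl⟩
        rw [← hFE]
        refine ⟨-(e₀ k) + z, hz, ?_⟩
        have h := hFvadd (-(e₀ k) + z)
        rw [add_neg_cancel_left] at h
        rw [h]
        abel
      · intro hy
        rw [← hFE] at hy
        obtain ⟨x, hx, hxe⟩ := hy
        refine ⟨(e₀ k) + x, by rwa [neg_add_cancel_left], ?_⟩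
        rw [hFvadd x, hxe]
        abel
    rw [h2]
  -- volumes
  set d : ENNReal := ENNReal.ofReal
    |LinearMap.det (F.linear : EuclideanSpace ℝ (Fin (k+1)) →ₗ[ℝ] EuclideanSpace ℝ (Fin (k+1)))|
    with hd_def
  have hVE : volume E = d * volume (UB (k+1)) := by
    rw [← hFE, affine_volume_image]
  have hVH : volume (convexHull ℝ (E ∪ (v +ᵥ E)))
      = d * (volume (UB (k+1)) + 2 * volume (UB k)) := by
    rw [hhull, affine_volume_image, volume_capsule]
  have hdet : LinearMap.det
      (F.linear : EuclideanSpace ℝ (Fin (k+1)) →ₗ[ℝ] EuclideanSpace ℝ (Fin (k+1))) ≠ 0 :=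
    F.linear.isUnit_det'.ne_zero
  have hd0 : d ≠ 0 := (ENNReal.ofReal_pos.mpr (abs_pos.mpr hdet)).ne'
  have hdtop : d ≠ ⊤ := ENNReal.ofReal_ne_top
  have hb0 : volume (UB (k+1)) ≠ 0 := (measure_closedBall_pos volume _ one_pos).ne'
  have hbtop : volume (UB (k+1)) ≠ ⊤ := measure_closedBall_lt_top.ne
  have hctop : volume (UB k) ≠ ⊤ := measure_closedBall_lt_top.ne
  have hub : ∀ j, ubVol j = (volume (UB j)).toReal := fun j => rfl
  rw [hVE, hVH, show k + 1 - 1 = k from rfl, hub, hub]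
  rw [ENNReal.toReal_mul, ENNReal.toReal_mul,
    ENNReal.toReal_add hbtop (ENNReal.mul_ne_top (by norm_num) hctop),
    ENNReal.toReal_mul]
  have hD : d.toReal > 0 := ENNReal.toReal_pos hd0 hdtop
  have hB : (volume (UB (k+1))).toReal > 0 := ENNReal.toReal_pos hb0 hbtop
  have h2r : ((2:ENNReal)).toReal = 2 := by norm_num
  rw [h2r]
  field_simp
end

section
/- Let K be an o-symmetric plane convex body such that the area of the triangle conv{o, x, y} is the same constant for all pairs x, y ∈ bd K with x Birkhoff-orthogonal to y. Then Birkhoff orthogonality in the norm with unit ball K is a symmetric relation. -/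
open MeasureTheory Metric Pointwise

/-- `x` is Birkhoff-orthogonal to `y` w.r.t. the body `K`: the line through `y` with
direction `x` supports `K` at `y`. -/
def BirkhoffOrth (K : Set (EuclideanSpace ℝ (Fin 2))) (x y : EuclideanSpace ℝ (Fin 2)) : Prop :=
  y ∈ K ∧ ∀ t : ℝ, y + t • x ∉ interior K

noncomputable abbrev E2 := EuclideanSpace ℝ (Fin 2)

noncomputable def detD (a b : E2) : ℝ := a 0 * b 1 - a 1 * b 0

noncomputable def tmap (a b : E2) : E2 →ₗ[ℝ] E2 where
  toFun p := p 0 • a + p 1 • b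
  map_add' p q := by simp [PiLp.add_apply, add_smul]; module
  map_smul' r p := by simp [PiLp.smul_apply, smul_smul]

lemma tmap_apply (a b p : E2) : tmap a b p = p 0 • a + p 1 • b := rfl

lemma tmap_det (a b : E2) : LinearMap.det (tmap a b) = detD a b := by
  rw [← LinearMap.det_toMatrix (EuclideanSpace.basisFun (Fin 2) ℝ).toBasis, Matrix.det_fin_two]
  simp [LinearMap.toMatrix_apply, tmap_apply, EuclideanSpace.basisFun_apply, detD,
    EuclideanSpace.single_apply, mul_comm]


lemma decomp (x : E2) :
    x = x 0 • EuclideanSpace.single 0 1 + x 1 • EuclideanSpace.single (1 : Fin 2) (1 : ℝ) := by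
  refine PiLp.ext fun i => ?_
  fin_cases i <;> simp [EuclideanSpace.single_apply]

noncomputable def stdTri : Set E2 :=
  convexHull ℝ {0, EuclideanSpace.single 0 1, EuclideanSpace.single 1 1}

lemma triangle_eq_image (a b : E2) :
    convexHull ℝ ({0, a, b} : Set E2) = tmap a b '' stdTri := by
  rw [stdTri, LinearMap.image_convexHull]
  congr 1
  have h0 : tmap a b 0 = 0 := map_zero _
  have h1 : tmap a b (EuclideanSpace.single 0 1) = a := by
    simp [tmap_apply, EuclideanSpace.single_apply]
  have h2 : tmap a b (EuclideanSpace.single 1 1) = b := by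
    simp [tmap_apply, EuclideanSpace.single_apply]
  simp [Set.image_insert_eq, h0, h1, h2]

lemma vol_triangle (a b : E2) :
    volume (convexHull ℝ ({0, a, b} : Set E2)) =
      ENNReal.ofReal |detD a b| * volume stdTri := by
  rw [triangle_eq_image, MeasureTheory.Measure.addHaar_image_linearMap, tmap_det]

lemma stdTri_vol_pos : 0 < volume stdTri := by
  have h : (interior stdTri).Nonempty := by
    rw [stdTri, interior_convexHull_nonempty_iff_affineSpan_eq_top]
    rw [show ({0, EuclideanSpace.single 0 1, EuclideanSpace.single 1 1} : Set E2)
      = insert 0 {EuclideanSpace.single 0 1, EuclideanSpace.single 1 1} from rfl]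
    have hspan : Submodule.span ℝ
        ({EuclideanSpace.single 0 1, EuclideanSpace.single 1 1} : Set E2) = ⊤ := by
      rw [Submodule.eq_top_iff']
      intro x
      rw [decomp x]
      exact Submodule.add_mem _
        (Submodule.smul_mem _ _ (Submodule.subset_span (by simp)))
        (Submodule.smul_mem _ _ (Submodule.subset_span (by simp)))
    rw [← AffineSubspace.coe_eq_univ_iff, affineSpan_insert_zero, hspan]
    simp
  obtain ⟨z, hz⟩ := h
  have := isOpen_interior.measure_pos (μ := volume) ⟨z, hz⟩
  exact lt_of_lt_of_le this (measure_mono interior_subset)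

lemma stdTri_vol_lt_top : volume stdTri < ⊤ :=
  ((Set.toFinite _).isCompact_convexHull ℝ).measure_lt_top

lemma area_eq (a b : E2) :
    (volume (convexHull ℝ ({0, a, b} : Set E2))).toReal =
      |detD a b| * (volume stdTri).toReal := by
  rw [vol_triangle, ENNReal.toReal_mul, ENNReal.toReal_ofReal (abs_nonneg _)]

noncomputable def gmap (y : E2) : E2 →ₗ[ℝ] ℝ where
  toFun w := y 0 * w 1 - y 1 * w 0
  map_add' a b := by simp [PiLp.add_apply]; ring
  map_smul' r a := by simp [PiLp.smul_apply]; ring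

lemma gmap_apply (y w : E2) : gmap y w = y 0 * w 1 - y 1 * w 0 := rfl

/-- If the area of `conv{o,x,y}` is a constant over all Birkhoff-orthogonal pairs of boundary
points of an o-symmetric plane convex body, then Birkhoff orthogonality is symmetric. -/
theorem birkhoffOrth_symm_of_const_triangle_area (K : Set (EuclideanSpace ℝ (Fin 2)))
    (hK : IsConvexBody K) (hsymm : K = -K)
    (hconst : ∃ c : ℝ, ∀ x y : EuclideanSpace ℝ (Fin 2), x ∈ frontier K → y ∈ frontier K →
      BirkhoffOrth K x y →
      (volume (convexHull ℝ ({0, x, y} : Set (EuclideanSpace ℝ (Fin 2))))).toReal = c) :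
    ∀ x y : EuclideanSpace ℝ (Fin 2), x ∈ frontier K → y ∈ frontier K →
      BirkhoffOrth K x y → BirkhoffOrth K y x := by
  obtain ⟨hconv, hcomp, hint⟩ := hK
  obtain ⟨c, hc⟩ := hconst
  intro x y hx hy hxy
  have hKclosed : IsClosed K := hcomp.isClosed
  -- the origin lies in the interior of `K`
  have h0 : (0 : E2) ∈ interior K := by
    obtain ⟨z, hz⟩ := hint
    have hz' : -z ∈ interior K := by
      rw [hsymm, show (-K : Set E2) = (Homeomorph.neg E2) ⁻¹' K from rfl,
        ← Homeomorph.preimage_interior]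
      simpa using hz
    have := hconv.interior hz hz' (by norm_num : (0:ℝ) ≤ 1/2)
      (by norm_num : (0:ℝ) ≤ 1/2) (by norm_num)
    simpa [smul_neg] using this
  have hfront_not_int : ∀ w : E2, w ∈ frontier K → w ∉ interior K := by
    intro w hw
    rw [hKclosed.frontier_eq] at hw
    exact hw.2
  have hxne : x ≠ 0 := fun h => hfront_not_int x hx (h ▸ h0)
  have hyne : y ≠ 0 := fun h => hfront_not_int y hy (h ▸ h0)
  -- `x` and `y` are linearly independent, so `gmap y x ≠ 0`
  have hgx : gmap y x ≠ 0 := by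
    intro hzero
    rw [gmap_apply] at hzero
    have hdep : ∃ r : ℝ, x = r • y := by
      rcases eq_or_ne (y 0) 0 with h0' | h0'
      · have h1' : y 1 ≠ 0 := by
          intro h1'
          apply hyne
          refine PiLp.ext fun i => ?_
          fin_cases i <;> simp [h0', h1']
        refine ⟨x 1 / y 1, PiLp.ext fun i => ?_⟩
        fin_cases i <;> simp [PiLp.smul_apply, smul_eq_mul]
        · rw [h0'] at hzero
          have hzz : y 1 * x 0 = 0 := by linarith
          rcases mul_eq_zero.mp hzz with h | h
          · exact absurd h h1'
          · rw [h, h0']; ring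
        · field_simp
      · refine ⟨x 0 / y 0, PiLp.ext fun i => ?_⟩
        fin_cases i <;> simp [PiLp.smul_apply, smul_eq_mul]
        · field_simp
        · field_simp; nlinarith [hzero]
    obtain ⟨r, hr⟩ := hdep
    rcases eq_or_ne r 0 with hr0 | hr0
    · exact hxne (by rw [hr, hr0, zero_smul])
    · apply hxy.2 (-(1/r))
      have h : y + (-(1/r)) • x = 0 := by
        rw [hr, smul_smul]
        have hh : -(1/r) * r = -1 := by field_simp
        rw [hh, neg_one_smul]
        abel
      rw [h]
      exact h0
  -- the sign-corrected functional
  set s : ℝ := if 0 < gmap y x then 1 else -1 with hs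
  set hfun : E2 → ℝ := fun w => s * gmap y w with hfun_def
  have hhx : hfun x = |gmap y x| := by
    rw [hfun_def, hs]
    split_ifs with h
    · rw [abs_of_pos h]; ring
    · push_neg at h
      rw [abs_of_neg (lt_of_le_of_ne h hgx)]; ring
  have hhxpos : 0 < hfun x := hhx ▸ abs_pos.mpr hgx
  have hcont : Continuous hfun :=
    continuous_const.mul (gmap y).continuous_of_finiteDimensional
  obtain ⟨u, huK, humax⟩ := hcomp.exists_isMaxOn ⟨y, hxy.1⟩ hcont.continuousOn
  have humax' : ∀ w ∈ K, hfun w ≤ hfun u := fun w hw => humax hw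
  -- on the interior the functional is strictly below its max
  have hstrict : ∀ w ∈ interior K, hfun w < hfun u := by
    intro w hw
    obtain ⟨ε, hε, hball⟩ := Metric.mem_nhds_iff.mp (mem_interior_iff_mem_nhds.mp hw)
    set v0 : E2 := EuclideanSpace.single 0 (-(y 1)) + EuclideanSpace.single 1 (y 0) with hv0
    have hgv0 : gmap y v0 = y 0 ^ 2 + y 1 ^ 2 := by
      rw [gmap_apply, hv0]
      simp [PiLp.add_apply, EuclideanSpace.single_apply]
      ring
    have hy2 : 0 < y 0 ^ 2 + y 1 ^ 2 := by
      rcases eq_or_ne (y 0) 0 with h1 | h1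
      · have h2 : y 1 ≠ 0 := by
          intro h2
          exact hyne (PiLp.ext fun i => by fin_cases i <;> simp [h1, h2])
        positivity
      · positivity
    set v : E2 := s • v0 with hv
    have hss : s * s = 1 := by rw [hs]; split_ifs <;> norm_num
    have hfv : hfun (w + (ε / (2 * ‖v‖)) • v) =
        hfun w + (ε / (2 * ‖v‖)) * (y 0 ^ 2 + y 1 ^ 2) := by
      have e1 : gmap y (w + (ε / (2 * ‖v‖)) • v) =
          gmap y w + (ε / (2 * ‖v‖)) * (s * (y 0 ^ 2 + y 1 ^ 2)) := by
        rw [map_add, hv, _root_.map_smul, _root_.map_smul, hgv0]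
        simp [smul_eq_mul, mul_assoc]
      rw [hfun_def]
      simp only []
      rw [e1]
      linear_combination (ε / (2 * ‖v‖)) * (y 0 ^ 2 + y 1 ^ 2) * hss
    have hvne : v ≠ 0 := by
      intro h
      have : gmap y v = 0 := by rw [h, map_zero]
      rw [hv, _root_.map_smul, smul_eq_mul, hgv0] at this
      have hsne : s ≠ 0 := by rw [hs]; split_ifs <;> norm_num
      exact absurd (by
        rcases mul_eq_zero.mp this with h' | h'
        · exact absurd h' hsne
        · exact h') (ne_of_gt hy2)
    have hvnorm : 0 < ‖v‖ := norm_pos_iff.mpr hvne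
    have hδ : 0 < ε / (2 * ‖v‖) := by positivity
    have hmem : w + (ε / (2 * ‖v‖)) • v ∈ K := by
      apply hball
      rw [Metric.mem_ball, dist_eq_norm]
      have : w + (ε / (2 * ‖v‖)) • v - w = (ε / (2 * ‖v‖)) • v := by abel
      rw [this, norm_smul, Real.norm_eq_abs, abs_of_pos hδ]
      have heq2 : ε / (2 * ‖v‖) * ‖v‖ = ε / 2 := by
        field_simp
      rw [heq2]
      linarith
    have := humax' _ hmem
    rw [hfv] at this
    nlinarith [mul_pos hδ hy2]
  have hufr : u ∈ frontier K := by
    rw [hKclosed.frontier_eq]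
    exact ⟨huK, fun hin => lt_irrefl _ (hstrict u hin)⟩
  have hgyy : gmap y y = 0 := by rw [gmap_apply]; ring
  have hline : ∀ w : E2, ∀ t : ℝ, hfun (w + t • y) = hfun w := by
    intro w t
    rw [hfun_def]
    simp only [map_add, _root_.map_smul, smul_eq_mul, hgyy]
    ring
  have hyu : BirkhoffOrth K y u := by
    refine ⟨huK, fun t hin => ?_⟩
    have h1 := hstrict _ hin
    rw [hline] at h1
    exact lt_irrefl _ h1
  -- use the constant-area hypothesis
  have hVpos : 0 < (volume stdTri).toReal :=
    ENNReal.toReal_pos (ne_of_gt stdTri_vol_pos) (ne_of_lt stdTri_vol_lt_top)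
  have h1 := hc x y hx hy hxy
  have h2 := hc y u hy hufr hyu
  rw [area_eq] at h1 h2
  have habs : |detD y u| = |detD x y| :=
    mul_right_cancel₀ (ne_of_gt hVpos) (h2.trans h1.symm)
  have hdetanti : detD x y = -(detD y x) := by rw [detD, detD]; ring
  have hxK : x ∈ K := hKclosed.frontier_subset hx
  have hxleu : hfun x ≤ hfun u := humax' _ hxK
  have hueq : hfun u = hfun x := by
    have hupos : 0 < hfun u := lt_of_lt_of_le hhxpos hxleu
    have habs_s : |s| = 1 := by rw [hs]; split_ifs <;> norm_num
    have h3 : |hfun u| = |detD y u| := by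
      rw [hfun_def]
      simp only [abs_mul, habs_s, one_mul]
      rfl
    have h4 : hfun u = |detD y u| := by rw [← h3, abs_of_pos hupos]
    rw [h4, habs, hdetanti, abs_neg, show detD y x = gmap y x from rfl, ← hhx]
  -- conclude
  refine ⟨hxK, fun t hin => ?_⟩
  have h5 := hstrict _ hin
  rw [hline, hueq] at h5
  exact lt_irrefl _ h5
end
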